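/- Let G be a finite group whose order is divisible by at least two distinct primes, and suppose that every 2-maximal subgroup of G is a Hall subgroup of G. If G is supersolvable, then the order of G is squarefree. -/

import Mathlib

/-- A subgroup `H` of a group `G` is a Hall subgroup if its order and index are coprime. -/
def IsHallSubgroup {G : Type*} [Group G] (H : Subgroup G) : Prop :=
  Nat.Coprime (Nat.card H) H.index

/-- `H` is a maximal subgroup of `M` (both viewed as subgroups of the ambient group). -/
def IsMaximalIn {G : Type*} [Group G] (H M : Subgroup G) : Prop :=
  H < M ∧ ∀ K : Subgroup G, H < K → K ≤ M → K = M

/-- `H` is a 2-maximal subgroup of `G`: it is maximal in some maximal subgroup of `G`. -/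
def Is2Maximal {G : Type*} [Group G] (H : Subgroup G) : Prop :=
  ∃ M : Subgroup G, IsCoatom M ∧ IsMaximalIn H M

/-- A group is supersolvable if it has a chain of normal subgroups from `⊥` to `⊤`
with all successive quotients cyclic. -/
def IsSupersolvable (G : Type*) [Group G] : Prop :=
  ∃ (n : ℕ) (H : Fin (n + 1) → Subgroup G) (hnorm : ∀ i, (H i).Normal),
    H 0 = ⊥ ∧ H (Fin.last n) = ⊤ ∧ Monotone H ∧
    ∀ i : Fin n, IsCyclic
      ((H i.succ).map (@QuotientGroup.mk' G _ (H i.castSucc) (hnorm i.castSucc)))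

open Subgroup in

lemma mem_of_pow_card_eq_one {M : Type*} [Group M] [Finite M] [IsCyclic M]
    (S : Subgroup M) {x : M} (hx : x ^ Nat.card S = 1) : x ∈ S := by
  classical
  have : Fintype M := Fintype.ofFinite M
  set d := Nat.card S with hd
  have hd0 : 0 < d := Nat.card_pos
  have hSF : (S : Set M).toFinset ⊆ Finset.univ.filter (fun y : M => y ^ d = 1) := by
    intro y hy
    simp only [Set.mem_toFinset, SetLike.mem_coe] at hy
    simp only [Finset.mem_filter, Finset.mem_univ, true_and]
    have h1 : (⟨y, hy⟩ : S) ^ d = 1 := pow_card_eq_one'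
    simpa using congrArg (Subtype.val) h1
  have hcard : (Finset.univ.filter (fun y : M => y ^ d = 1)).card ≤ d :=
    IsCyclic.card_pow_eq_one_le hd0
  have hScard : (S : Set M).toFinset.card = d := by
    rw [← Nat.card_eq_card_toFinset]; rfl
  have heq : (S : Set M).toFinset = Finset.univ.filter (fun y : M => y ^ d = 1) :=
    Finset.eq_of_subset_of_card_le hSF (by rw [hScard]; exact hcard)
  have hxF : x ∈ Finset.univ.filter (fun y : M => y ^ d = 1) := by
    simp only [Finset.mem_filter, Finset.mem_univ, true_and]; exact hx
  rw [← heq] at hxF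
  simpa using hxF

lemma normal_of_le_cyclic {Q : Type*} [Group Q] [Finite Q] {N R : Subgroup Q}
    (hN : N.Normal) (hc : IsCyclic N) (hRN : R ≤ N) : R.Normal := by
  constructor
  intro x hx g
  have hxN : x ∈ N := hRN hx
  have hgN : g * x * g⁻¹ ∈ N := hN.conj_mem x hxN g
  set d := Nat.card (R.subgroupOf N) with hdd
  have hxS : (⟨x, hxN⟩ : N) ∈ R.subgroupOf N := by
    rwa [Subgroup.mem_subgroupOf]
  have hxd : x ^ d = 1 := by
    have h1 : (⟨(⟨x, hxN⟩ : N), hxS⟩ : R.subgroupOf N) ^ d = 1 := pow_card_eq_one'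
    have := congrArg (Subtype.val) (congrArg (Subtype.val) h1)
    simpa using this
  have hpow : (⟨g * x * g⁻¹, hgN⟩ : N) ^ d = 1 := by
    have : (g * x * g⁻¹) ^ d = 1 := by
      rw [conj_pow, hxd, mul_one, mul_inv_cancel]
    ext
    simpa using this
  have := mem_of_pow_card_eq_one (R.subgroupOf N) hpow
  rwa [Subgroup.mem_subgroupOf] at this

lemma exists_index_prime_of_cyclic_normal {Q : Type*} [Group Q] [Finite Q]
    {N : Subgroup Q} (hN : N.Normal) (hc : IsCyclic N) {r : ℕ} (hr : r.Prime)
    (hrN : r ∣ Nat.card N) (hri : ¬ r ∣ N.index) :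
    ∃ K : Subgroup Q, K.index = r := by
  have : Fact r.Prime := ⟨hr⟩
  set a := (Nat.card Q).factorization r with ha
  have hcardQ : Nat.card N * N.index = Nat.card Q := Subgroup.card_mul_index N
  have hQ0 : Nat.card Q ≠ 0 := Nat.card_pos.ne'
  have hrQ : r ∣ Nat.card Q := hcardQ ▸ Dvd.dvd.mul_right hrN _
  have hpa : r ^ a ∣ Nat.card Q := Nat.ordProj_dvd _ r
  have hcop : Nat.Coprime (r ^ a) N.index :=
    Nat.Coprime.pow_left a ((Nat.Prime.coprime_iff_not_dvd hr).mpr hri)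
  have hpaN : r ^ a ∣ Nat.card N :=
    (Nat.Coprime.dvd_of_dvd_mul_right hcop (hcardQ ▸ hpa))
  obtain ⟨K0, hK0⟩ := Sylow.exists_subgroup_card_pow_prime (G := N) r (n := a) hpaN
  set Rbar := K0.map N.subtype with hRbar
  have hRbarle : Rbar ≤ N := Subgroup.map_subtype_le K0
  have hRbarcard : Nat.card Rbar = r ^ a := by
    rw [← hK0]
    exact (Nat.card_congr
      (Subgroup.equivMapOfInjective K0 N.subtype N.subtype_injective).toEquiv).symm
  obtain ⟨K1, hK1⟩ := Sylow.exists_subgroup_card_pow_prime (G := Rbar) r (n := a - 1)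
    (show r ^ (a - 1) ∣ Nat.card Rbar by
      rw [hRbarcard]; exact pow_dvd_pow r (Nat.sub_le a 1))
  set R' := K1.map Rbar.subtype with hR'def
  have hR'le : R' ≤ Rbar := Subgroup.map_subtype_le K1
  have hR'leN : R' ≤ N := hR'le.trans hRbarle
  have hR'card : Nat.card R' = r ^ (a - 1) := by
    rw [← hK1]
    exact (Nat.card_congr
      (Subgroup.equivMapOfInjective K1 Rbar.subtype Rbar.subtype_injective).toEquiv).symm
  have hRbarNormal : Rbar.Normal := normal_of_le_cyclic hN hc hRbarle
  have hR'Normal : R'.Normal := normal_of_le_cyclic hN hc hR'leN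
  have ha1 : 1 ≤ a := (Nat.Prime.factorization_pos_of_dvd hr hQ0 hrQ)
  have hRbarmul : Nat.card Rbar * Rbar.index = Nat.card Q := Subgroup.card_mul_index Rbar
  have hrRbar : ¬ r ∣ Rbar.index := by
    intro h
    have : r ^ (a + 1) ∣ Nat.card Q := by
      rw [← hRbarmul, hRbarcard, pow_succ]
      exact mul_dvd_mul dvd_rfl h
    exact Nat.pow_succ_factorization_not_dvd hQ0 hr this
  set f := QuotientGroup.mk' R' with hf
  set N2 := Rbar.map f with hN2def
  have hN2normal : N2.Normal := hRbarNormal.map f (QuotientGroup.mk'_surjective R')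
  have hN2index : N2.index = Rbar.index :=
    Subgroup.index_map_eq Rbar (QuotientGroup.mk'_surjective R')
      (by rw [QuotientGroup.ker_mk']; exact hR'le)
  have hQ2card : Nat.card (Q ⧸ R') = R'.index := (Subgroup.index_eq_card R').symm
  have hN2mul : Nat.card N2 * N2.index = Nat.card (Q ⧸ R') := Subgroup.card_mul_index N2
  have hR'mul : Nat.card R' * R'.index = Nat.card Q := Subgroup.card_mul_index R'
  have hRidx : R'.index = r * Rbar.index := by
    have h1 : r ^ (a - 1) * R'.index = Nat.card Q := by rw [← hR'card]; exact hR'mul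
    have h2 : r ^ (a - 1) * (r * Rbar.index) = Nat.card Q := by
      rw [← hRbarmul, hRbarcard, ← mul_assoc, ← pow_succ, Nat.sub_add_cancel ha1]
    exact Nat.eq_of_mul_eq_mul_left (pow_pos hr.pos _) (h1.trans h2.symm)
  have hN2card : Nat.card N2 = r := by
    have h3 : Nat.card N2 * Rbar.index = r * Rbar.index := by
      rw [← hN2index, hN2mul, hQ2card, hRidx, hN2index]
    have hpos : 0 < Rbar.index := Nat.pos_of_ne_zero Rbar.index_ne_zero_of_finite
    exact Nat.eq_of_mul_eq_mul_right hpos h3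
  have hcop2 : Nat.Coprime (Nat.card N2) N2.index := by
    rw [hN2card, hN2index]
    exact (Nat.Prime.coprime_iff_not_dvd hr).mpr hrRbar
  obtain ⟨C, hC⟩ := Subgroup.exists_right_complement'_of_coprime hcop2
  refine ⟨C.comap f, ?_⟩
  rw [Subgroup.index_comap_of_surjective C (QuotientGroup.mk'_surjective R'),
    hC.index_eq_card, hN2card]

lemma exists_subgroup_index_prime {G : Type*} [Group G] [Finite G]
    (hss : IsSupersolvable G) {r : ℕ} (hr : r.Prime) (hdvd : r ∣ Nat.card G) :
    ∃ K : Subgroup G, K.index = r := by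
  obtain ⟨n, H, hnorm, h0, hlast, hmono, hcyc⟩ := hss
  have hstep : ∃ i : Fin n, r ∣ (H i.castSucc).index ∧ ¬ r ∣ (H i.succ).index := by
    by_contra hcon
    push_neg at hcon
    have hall : ∀ j : Fin (n + 1), r ∣ (H j).index := by
      intro j
      induction j using Fin.induction with
      | zero => rw [h0, Subgroup.index_bot]; exact hdvd
      | succ i ih => exact hcon i ih
    have h1 := hall (Fin.last n)
    rw [hlast, Subgroup.index_top] at h1
    exact hr.ne_one (Nat.eq_one_of_dvd_one h1)
  obtain ⟨i, hiA, hiB⟩ := hstep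
  haveI hAnorm : (H i.castSucc).Normal := hnorm i.castSucc
  haveI hBnorm : (H i.succ).Normal := hnorm i.succ
  have hAB : H i.castSucc ≤ H i.succ := hmono (Fin.castSucc_le_succ i)
  set N := (H i.succ).map (QuotientGroup.mk' (H i.castSucc)) with hNdef
  haveI hNnormal : N.Normal :=
    hBnorm.map _ (QuotientGroup.mk'_surjective (H i.castSucc))
  have hNcyc : IsCyclic N := hcyc i
  have hNindex : N.index = (H i.succ).index :=
    Subgroup.index_map_eq _ (QuotientGroup.mk'_surjective (H i.castSucc))
      (by rw [QuotientGroup.ker_mk']; exact hAB)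
  have hrB : ¬ r ∣ N.index := by rw [hNindex]; exact hiB
  have hrN : r ∣ Nat.card N := by
    have hQcard : Nat.card N * N.index = Nat.card (G ⧸ H i.castSucc) :=
      Subgroup.card_mul_index N
    have hidx : Nat.card (G ⧸ H i.castSucc) = (H i.castSucc).index :=
      (Subgroup.index_eq_card _).symm
    have hdA : r ∣ Nat.card N * N.index := by rw [hQcard, hidx]; exact hiA
    rcases (Nat.Prime.dvd_mul hr).mp hdA with h | h
    · exact h
    · exact absurd h hrB
  obtain ⟨K, hK⟩ := exists_index_prime_of_cyclic_normal hNnormal hNcyc hr hrN hrB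
  exact ⟨K.comap (QuotientGroup.mk' (H i.castSucc)),
    by rw [Subgroup.index_comap_of_surjective K
      (QuotientGroup.mk'_surjective (H i.castSucc)), hK]⟩

lemma isSupersolvable_subgroup {G : Type*} [Group G] (K : Subgroup G)
    (hss : IsSupersolvable G) : IsSupersolvable K := by
  obtain ⟨n, H, hnorm, h0, hlast, hmono, hcyc⟩ := hss
  refine ⟨n, fun i => (H i).subgroupOf K,
    fun i => Subgroup.Normal.subgroupOf (hnorm i) K, ?_, ?_, ?_, ?_⟩
  · show (H 0).subgroupOf K = ⊥
    rw [h0]; exact Subgroup.bot_subgroupOf K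
  · show (H (Fin.last n)).subgroupOf K = ⊤
    rw [hlast]; exact Subgroup.top_subgroupOf K
  · intro i j hij
    exact Subgroup.comap_mono (hmono hij)
  · intro i
    haveI hAnorm : (H i.castSucc).Normal := hnorm i.castSucc
    haveI : ((H i.castSucc).subgroupOf K).Normal :=
      Subgroup.Normal.subgroupOf (hnorm i.castSucc) K
    set A' := (H i.castSucc).subgroupOf K with hA'
    set B' := (H i.succ).subgroupOf K with hB'
    have hle : A' ≤ (H i.castSucc).comap K.subtype := le_refl _
    set φ : K ⧸ A' →* G ⧸ H i.castSucc :=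
      QuotientGroup.map A' (H i.castSucc) K.subtype hle with hφ
    have hinj : Function.Injective φ := by
      rw [← MonoidHom.ker_eq_bot_iff, eq_bot_iff]
      intro x hx
      induction x using QuotientGroup.induction_on with
      | H k =>
        simp only [MonoidHom.mem_ker, hφ, QuotientGroup.map_mk] at hx
        rw [QuotientGroup.eq_one_iff] at hx
        rw [Subgroup.mem_bot, QuotientGroup.eq_one_iff]
        exact hx
    have hcomp : (B'.map (QuotientGroup.mk' A')).map φ ≤
        (H i.succ).map (QuotientGroup.mk' (H i.castSucc)) := by
      rw [Subgroup.map_map]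
      intro x hx
      obtain ⟨k, hk, rfl⟩ := hx
      exact ⟨(k : G), hk, rfl⟩
    haveI : IsCyclic ((H i.succ).map (QuotientGroup.mk' (H i.castSucc))) := hcyc i
    haveI hc2 : IsCyclic ((B'.map (QuotientGroup.mk' A')).map φ) :=
      Subgroup.isCyclic_of_le hcomp
    have e := Subgroup.equivMapOfInjective (B'.map (QuotientGroup.mk' A')) φ hinj
    exact isCyclic_of_surjective e.symm e.symm.surjective

theorem supersolvable_of_hall_two_maximal_squarefree
    {G : Type*} [Group G] [Finite G]
    (hπ : ∃ p q : ℕ, p.Prime ∧ q.Prime ∧ p ≠ q ∧ p ∣ Nat.card G ∧ q ∣ Nat.card G)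
    (hhall : ∀ H : Subgroup G, Is2Maximal H → IsHallSubgroup H)
    (hss : IsSupersolvable G) :
    Squarefree (Nat.card G) := by
  rw [Nat.squarefree_iff_prime_squarefree]
  intro p hp' hpp
  have hp : p.Prime := hp'
  obtain ⟨p0, q0, hp0, hq0, hne, hd0, hd1⟩ := hπ
  obtain ⟨q, hq, hqp, hqd⟩ : ∃ q : ℕ, q.Prime ∧ q ≠ p ∧ q ∣ Nat.card G := by
    by_cases h : p0 = p
    · exact ⟨q0, hq0, by rw [← h]; exact hne.symm, hd1⟩
    · exact ⟨p0, hp0, h, hd0⟩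
  have hcoppq : Nat.Coprime p q := (Nat.coprime_primes hp hq).mpr (Ne.symm hqp)
  obtain ⟨K, hK⟩ := exists_subgroup_index_prime hss hq hqd
  have hcardK : Nat.card K * K.index = Nat.card G := Subgroup.card_mul_index K
  have hppK : p * p ∣ Nat.card K := by
    refine (Nat.Coprime.dvd_of_dvd_mul_right (Nat.Coprime.mul hcoppq hcoppq) ?_)
    rw [← hK, hcardK]; exact hpp
  have hpK : p ∣ Nat.card K := (dvd_mul_right p p).trans hppK
  obtain ⟨H', hH'⟩ := exists_subgroup_index_prime (isSupersolvable_subgroup K hss) hp hpK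
  set Hm := H'.map K.subtype with hHm
  have hHmle : Hm ≤ K := Subgroup.map_subtype_le H'
  have hHmidx : Hm.index = p * q := by
    rw [hHm, Subgroup.index_map_subtype, hH', hK]
  -- K is a coatom
  have hKcoatom : IsCoatom K := by
    constructor
    · intro h
      rw [h, Subgroup.index_top] at hK
      exact hq.ne_one hK.symm
    · intro L hKL
      have hdvd : L.index ∣ q := by rw [← hK]; exact Subgroup.index_dvd_of_le hKL.le
      rcases (Nat.Prime.eq_one_or_self_of_dvd hq _ hdvd) with h1 | h1
      · exact Subgroup.index_eq_one.mp h1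
      · exfalso
        have hcardL : Nat.card L * L.index = Nat.card G := Subgroup.card_mul_index L
        have hcards : Nat.card L = Nat.card K := by
          have h5 : Nat.card L * L.index = Nat.card K * K.index := by
            rw [hcardL, hcardK]
          rw [h1, hK] at h5
          exact Nat.eq_of_mul_eq_mul_right hq.pos h5
        have := Subgroup.eq_of_le_of_card_ge hKL.le (le_of_eq hcards)
        exact hKL.ne this
  -- Hm is maximal in K
  have hHmrel : Hm.relIndex K = p := by
    have := Subgroup.relIndex_mul_index hHmle
    rw [hHmidx, hK] at this
    exact Nat.eq_of_mul_eq_mul_right hq.pos this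
  have hHmmax : IsMaximalIn Hm K := by
    constructor
    · refine lt_of_le_of_ne hHmle ?_
      intro h
      rw [h, hK] at hHmidx
      have : p = 1 := by
        have := hHmidx.symm
        nlinarith [hq.pos, hp.one_lt, hq.one_lt]
      exact hp.ne_one this
    · intro L hHL hLK
      have hrel : Hm.relIndex L * L.relIndex K = p := by
        rw [← hHmrel]
        exact Subgroup.relIndex_mul_relIndex Hm L K hHL.le hLK
      rcases (Nat.Prime.eq_one_or_self_of_dvd hp _ ⟨Hm.relIndex L, by rw [mul_comm] at hrel; exact hrel.symm⟩) with h1 | h1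
      · exact le_antisymm hLK (Subgroup.relIndex_eq_one.mp h1)
      · exfalso
        have h2 : Hm.relIndex L = 1 := by
          have hpos : 0 < p := hp.pos
          nlinarith [hrel, h1]
        exact hHL.not_ge (Subgroup.relIndex_eq_one.mp h2)
  -- Hall contradiction
  have hhm := hhall Hm ⟨K, hKcoatom, hHmmax⟩
  rw [IsHallSubgroup] at hhm
  have hpHm : p ∣ Nat.card Hm := by
    have hcardHm : Nat.card Hm * (p * q) = Nat.card G := by
      rw [← hHmidx]; exact Subgroup.card_mul_index Hm
    have h3 : p * p ∣ Nat.card Hm * p * q := by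
      rw [mul_assoc, hcardHm]; exact hpp
    have h4 : p ∣ Nat.card Hm * q := by
      have := (Nat.mul_dvd_mul_iff_right hp.pos).mp
        (show (p * 1) * p ∣ (Nat.card Hm * q) * p by
          rw [mul_one]
          calc p * p ∣ Nat.card Hm * p * q := h3
          _ = Nat.card Hm * q * p := by ring)
      simpa using this
    exact Nat.Coprime.dvd_of_dvd_mul_right hcoppq h4
  have hpidx : p ∣ Hm.index := by rw [hHmidx]; exact dvd_mul_right p q
  have : p ∣ 1 := hhm ▸ Nat.dvd_gcd hpHm hpidx
  exact hp.ne_one (Nat.eq_one_of_dvd_one this)
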